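/- Let x ∈ A^ℤ be an aperiodic linearly recurrent sequence with constant K. Then x is (K+1)-power-free: there is no nonempty word u with u^{K+1} a factor of x. -/

import Mathlib

open List

/-- Extension of a substitution to words. -/
def applyW {A : Type*} (σ : A → List A) (w : List A) : List A := w.flatMap σ

/-- `σⁿ` as a map on letters. -/
def powL {A : Type*} (σ : A → List A) (n : ℕ) (a : A) : List A := (applyW σ)^[n] [a]

/-- `σⁿ` as a map on words. -/
def iterW {A : Type*} (σ : A → List A) (n : ℕ) (w : List A) : List A := (applyW σ)^[n] w

/-- A substitution is non-erasing if no letter maps to the empty word. -/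
def NonErasing {A : Type*} (σ : A → List A) : Prop := ∀ a, σ a ≠ []

/-- A substitution is primitive if some power maps any letter to a word containing
every letter. -/
def PrimitiveSub {A : Type*} (σ : A → List A) : Prop :=
  ∃ k : ℕ, ∀ b c : A, b ∈ powL σ k c

/-- `σ` is prolongable on `a` if `σ a = a u` with `u` nonempty. -/
def Prolongable {A : Type*} (σ : A → List A) (a : A) : Prop :=
  ∃ u : List A, u ≠ [] ∧ σ a = a :: u

/-- `|σⁿ|`, the maximal length of the image of a letter under `σⁿ`. -/
def maxLen {A : Type*} [Fintype A] (σ : A → List A) (n : ℕ) : ℕ :=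
  Finset.univ.sup fun a => (powL σ n a).length

/-- `⟨σⁿ⟩`, the minimal length of the image of a letter under `σⁿ`. -/
def minLen {A : Type*} [Fintype A] [Nonempty A] (σ : A → List A) (n : ℕ) : ℕ :=
  Finset.univ.inf' Finset.univ_nonempty fun a => (powL σ n a).length

/-- The factor `x_{[i,j)}` of a two-sided sequence. -/
def seg {A : Type*} (x : ℤ → A) (i j : ℤ) : List A :=
  (List.range (j - i).toNat).map fun t => x (i + t)

/-- `w` is a factor of the two-sided sequence `x`. -/
def FactorOf {A : Type*} (x : ℤ → A) (w : List A) : Prop :=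
  ∃ i : ℤ, w = seg x i (i + w.length)

/-- The language of a substitution: words occurring in some `σⁿ(c)`. -/
def LangOf {A : Type*} (σ : A → List A) (w : List A) : Prop :=
  ∃ n : ℕ, ∃ c : A, w <:+: powL σ n c

/-- The map `f^{(1)}` associated with the substitution `τ` and the sequence `x`;
the map `f^{(p)}` of `σ` is obtained as `F (powL σ p) x`. -/
def F {A : Type*} (τ : A → List A) (x : ℤ → A) (i : ℤ) : ℤ :=
  if 0 ≤ i then (((seg x 0 i).flatMap τ).length : ℤ)
  else -(((seg x i 0).flatMap τ).length : ℤ)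

/-- `x` is a (two-sided) fixed point of `τ`:  `τ (x i)` is the block of `x`
between `f^{(1)}(i)` and `f^{(1)}(i+1)`. -/
def IsFixedPoint {A : Type*} (τ : A → List A) (x : ℤ → A) : Prop :=
  ∀ i : ℤ, seg x (F τ x i) (F τ x (i + 1)) = τ (x i)

/-- `x` is an admissible fixed point of `τ`: it is a fixed point and the word
`x₋₁x₀` occurs in some `τⁿ(c)`. -/
def Admissible {A : Type*} (τ : A → List A) (x : ℤ → A) : Prop :=
  IsFixedPoint τ x ∧ ∃ n : ℕ, ∃ c : A, [x (-1), x 0] <:+: powL τ n c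

/-- `τ` is recognizable on `x` with constant `L`. -/
def RecogWith {A : Type*} (τ : A → List A) (x : ℤ → A) (L : ℤ) : Prop :=
  0 < L ∧ ∀ i m : ℤ,
    seg x (m - L) (m + L + 1) = seg x (F τ x i - L) (F τ x i + L + 1) →
    ∃ j : ℤ, m = F τ x j ∧ x i = x j

/-- `x` is `k`-power-free: no nonempty word `w` has `w^k` as a factor of `x`. -/
def PowerFree {A : Type*} (x : ℤ → A) (k : ℕ) : Prop :=
  ∀ w : List A, w ≠ [] → ¬ FactorOf x (List.replicate k w).flatten

/-- `x` is recurrent: every factor occurs infinitely many times. -/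
def Recurrent {A : Type*} (x : ℤ → A) : Prop :=
  ∀ w : List A, FactorOf x w → ∀ N : ℤ, ∃ i : ℤ, N ≤ i ∧ w = seg x i (i + w.length)

/-- Number of occurrences of `u` in `w`. -/
def occCount {A : Type*} [DecidableEq A] (u w : List A) : ℕ :=
  (List.range (w.length + 1)).countP fun i => decide (u <+: w.drop i)

/-- `r` is a return word to `u` in `x`. -/
def ReturnWordOf {A : Type*} [DecidableEq A] (x : ℤ → A) (u r : List A) : Prop :=
  FactorOf x (r ++ u) ∧ u <+: (r ++ u) ∧ occCount u (r ++ u) = 2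

/-- `r` is a return word to `u` in the language of `σ`. -/
def ReturnWordLang {A : Type*} [DecidableEq A] (σ : A → List A) (u r : List A) : Prop :=
  LangOf σ (r ++ u) ∧ u <+: (r ++ u) ∧ occCount u (r ++ u) = 2

/-- `x` is linearly recurrent with constant `K`. -/
def LinRec {A : Type*} [DecidableEq A] (x : ℤ → A) (K : ℕ) : Prop :=
  Recurrent x ∧ ∀ u r : List A, FactorOf x u → ReturnWordOf x u r → r.length ≤ K * u.length

/-- `x` is aperiodic (not periodic). -/
def AperiodicSeq {A : Type*} (x : ℤ → A) : Prop :=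
  ¬ ∃ p : ℤ, 0 < p ∧ ∀ i : ℤ, x (i + p) = x i

/-- Factor complexity of `x`. -/
noncomputable def complexity {A : Type*} (x : ℤ → A) (n : ℕ) : ℕ :=
  Set.ncard {w : List A | FactorOf x w ∧ w.length = n}


namespace PF7
open List

variable {A : Type*}

lemma seg_eq (x : ℤ → A) (i j : ℤ) :
    seg x i j = (List.range (j - i).toNat).map (fun t : ℕ => x (i + (t : ℤ))) := by
  have h : ∀ l : List ℕ, (l.flatMap fun a : ℕ => [(a : ℤ)]) = l.map (fun a : ℕ => (a : ℤ)) := by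
    intro l; induction l with
    | nil => rfl
    | cons a l ih => rw [List.flatMap_cons, List.map_cons, ih]; rfl
  show List.map _ ((List.range (j - i).toNat).flatMap (fun a : ℕ => [(a : ℤ)])) = _
  rw [h, List.map_map]; rfl

lemma seg_len (x : ℤ → A) (q : ℤ) (m : ℕ) : (seg x q (q + m)).length = m := by
  rw [seg_eq, List.length_map, List.length_range]; omega

lemma seg_getElem (x : ℤ → A) {i j : ℤ} {t : ℕ} (h : t < (seg x i j).length) :
    (seg x i j)[t] = x (i + t) := by
  simp only [seg_eq, List.getElem_map, List.getElem_range]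

lemma seg_take (x : ℤ → A) (q : ℤ) {m c : ℕ} (hc : c ≤ m) :
    (seg x q (q + m)).take c = seg x q (q + c) := by
  apply List.ext_getElem
  · simp only [List.length_take, seg_len]; omega
  · intro j h1 h2
    simp only [List.getElem_take, seg_getElem]

lemma seg_drop (x : ℤ → A) (q : ℤ) {m t : ℕ} (ht : t ≤ m) :
    (seg x q (q + m)).drop t = seg x (q + t) ((q + t) + ((m - t : ℕ) : ℤ)) := by
  apply List.ext_getElem
  · simp only [List.length_drop, seg_len]
  · intro j h1 h2
    simp only [List.getElem_drop, seg_getElem]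
    congr 1
    push_cast
    ring

lemma seg_append (x : ℤ → A) (q : ℤ) (a b : ℕ) :
    seg x q (q + ((a + b : ℕ) : ℤ)) = seg x q (q + a) ++ seg x (q + a) ((q + a) + b) := by
  have h := List.take_append_drop a (seg x q (q + ((a + b : ℕ) : ℤ)))
  rw [seg_take x q (by omega), seg_drop x q (by omega)] at h
  simp only [Nat.add_sub_cancel_left] at h
  exact h.symm

lemma getElem_congr_idx {l : List A} {a b : ℕ} (h : a = b) (ha : a < l.length) :
    l[a]'ha = l[b]'(h ▸ ha) := by subst h; rfl

lemma countP_pair {p : ℕ → Bool} {N a b : ℕ} (hab : a < b) (hbN : b < N)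
    (h : ∀ t, t < N → (p t = true ↔ (t = a ∨ t = b))) : (List.range N).countP p = 2 := by
  rw [List.countP_eq_length_filter]
  have hnd : ((List.range N).filter p).Nodup := List.nodup_range.filter _
  have hnd2 : ([a, b] : List ℕ).Nodup := by simp [Nat.ne_of_lt hab]
  have hperm : ((List.range N).filter p) ~ [a, b] := by
    rw [List.perm_ext_iff_of_nodup hnd hnd2]
    intro t
    simp only [List.mem_filter, List.mem_range, List.mem_cons, List.not_mem_nil, or_false]
    constructor
    · rintro ⟨ht, hp⟩; exact (h t ht).mp hp
    · rintro (rfl | rfl)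
      · exact ⟨lt_trans hab hbN, (h t (lt_trans hab hbN)).mpr (Or.inl rfl)⟩
      · exact ⟨hbN, (h t hbN).mpr (Or.inr rfl)⟩
  rw [hperm.length_eq]
  rfl

lemma flat_len (u : List A) (M : ℕ) : ((List.replicate M u).flatten).length = M * u.length := by
  rw [List.length_flatten, List.map_replicate, List.sum_replicate, smul_eq_mul]

lemma flat_getElem? (u : List A) (M t : ℕ) (h : t < M * u.length) :
    ((List.replicate M u).flatten)[t]? = u[t % u.length]? := by
  induction M generalizing t with
  | zero => rw [Nat.zero_mul] at h; omega
  | succ M ih =>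
    rw [List.replicate_succ, List.flatten_cons]
    by_cases hc : t < u.length
    · rw [List.getElem?_append, if_pos hc, Nat.mod_eq_of_lt hc]
    · push_neg at hc
      have h' : t - u.length < M * u.length := by
        rw [Nat.succ_mul] at h; omega
      rw [List.getElem?_append, if_neg (by omega), ih _ h', ← Nat.mod_eq_sub_mod hc]

lemma occ_gap [DecidableEq A] (x : ℤ → A) (K : ℕ) (hlr : LinRec x K)
    (v : List A) (hv : v ≠ []) (m : ℕ) (hm : v.length = m)
    (q1 q0 : ℤ) (h1 : v = seg x q1 (q1 + m)) (h0 : v = seg x q0 (q0 + m))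
    (hlt : q1 < q0) (hgap : ∀ q : ℤ, q1 < q → q < q0 → v ≠ seg x q (q + m)) :
    q0 - q1 ≤ ((K * m : ℕ) : ℤ) := by
  have npos : 0 < m := by rw [← hm]; exact List.length_pos_iff.mpr hv
  set d : ℕ := (q0 - q1).toNat with hdd
  have hd : (d : ℤ) = q0 - q1 := Int.toNat_of_nonneg (by omega)
  have dpos : 0 < d := by omega
  set r : List A := seg x q1 (q1 + d) with hr
  have hrlen : r.length = d := seg_len x q1 d
  have hw : r ++ v = seg x q1 (q1 + ((d + m : ℕ) : ℤ)) := by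
    rw [seg_append x q1 d m, ← hr]
    congr 1
    rw [show q1 + (d : ℤ) = q0 by omega]
    exact h0
  have hwlen : (r ++ v).length = d + m := by rw [List.length_append, hrlen, hm]
  have hfacv : FactorOf x v := ⟨q1, by rw [hm]; exact h1⟩
  have hfac : FactorOf x (r ++ v) := ⟨q1, by rw [hwlen]; exact hw⟩
  have hpre : v <+: r ++ v := by
    rw [List.prefix_iff_eq_take, hm, hw, seg_take x q1 (by omega)]
    exact h1
  have hocc : occCount v (r ++ v) = 2 := by
    unfold occCount
    rw [hwlen]
    apply countP_pair (a := 0) (b := d) dpos (by omega)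
    intro t ht
    rw [decide_eq_true_eq]
    constructor
    · intro hp
      have hlen' := hp.length_le
      rw [List.length_drop, hwlen, hm] at hlen'
      have htd : t ≤ d := by omega
      have heq : v = ((r ++ v).drop t).take v.length := List.prefix_iff_eq_take.mp hp
      rw [hm, hw, seg_drop x q1 (by omega), seg_take x _ (by omega)] at heq
      by_contra hne
      push_neg at hne
      obtain ⟨hne0, hned⟩ := hne
      exact hgap (q1 + t) (by omega) (by omega) heq
    · rintro (rfl | rfl)
      · rw [List.drop_zero]; exact hpre
      · rw [← hrlen, List.drop_left]
  have hret := hlr.2 v r hfacv ⟨hfac, hpre, hocc⟩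
  rw [hrlen, hm] at hret
  generalize hM : K * m = M at hret ⊢
  omega

lemma window [DecidableEq A] (x : ℤ → A) {K : ℕ} (hlr : LinRec x K)
    {u : List A} (hu : u ≠ []) (hWfac : FactorOf x (List.replicate (K + 1) u).flatten) (i : ℤ) :
    ∃ t : ℕ, ∀ j : ℕ, j < u.length →
      x (i + (j : ℤ)) = u[(t + j) % u.length]'(Nat.mod_lt _ (List.length_pos_iff.mpr hu)) := by
  have npos : 0 < u.length := List.length_pos_iff.mpr hu
  set W := (List.replicate (K + 1) u).flatten with hWdef
  have hWlen : W.length = (K + 1) * u.length := flat_len u (K + 1)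
  obtain ⟨i', hi'ge, hW'⟩ := hlr.1 W hWfac i
  rw [hWlen] at hW'
  have hvfac : FactorOf x (seg x i (i + (u.length : ℤ))) := ⟨i, by rw [seg_len]⟩
  obtain ⟨q0, ⟨hq0ge, hq0occ⟩, hq0min⟩ :=
    Int.exists_least_of_bdd
      (P := fun q => i' ≤ q ∧ seg x i (i + (u.length : ℤ)) = seg x q (q + (u.length : ℤ)))
      ⟨i', fun z hz => hz.1⟩
      (by obtain ⟨q, hq1, hq2⟩ := hlr.1 _ hvfac i'
          rw [seg_len] at hq2
          exact ⟨q, hq1, hq2⟩)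
  by_cases hcase : q0 ≤ i' + ((K * u.length : ℕ) : ℤ)
  · set t : ℕ := (q0 - i').toNat with htdef
    have ht : (t : ℤ) = q0 - i' := Int.toNat_of_nonneg (by omega)
    refine ⟨t, fun j hj => ?_⟩
    have hmul : (K + 1) * u.length = K * u.length + u.length := by ring
    have htj : t + j < (K + 1) * u.length := by rw [hmul]; omega
    have a2 : j < (seg x q0 (q0 + (u.length : ℤ))).length := by rw [seg_len]; exact hj
    have e1 : x (i + (j : ℤ)) = x (q0 + (j : ℤ)) := by
      calc x (i + (j : ℤ))
          = (seg x i (i + (u.length : ℤ)))[j]'(by rw [seg_len]; exact hj) :=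
            (seg_getElem x _).symm
        _ = (seg x q0 (q0 + (u.length : ℤ)))[j]'a2 := List.getElem_of_eq hq0occ _
        _ = x (q0 + (j : ℤ)) := seg_getElem x a2
    have e2 : x (q0 + (j : ℤ)) = x (i' + ((t + j : ℕ) : ℤ)) := by congr 1; push_cast; omega
    have b1 : t + j < W.length := by rw [hWlen]; exact htj
    have b2 : W[t + j]'b1 = x (i' + ((t + j : ℕ) : ℤ)) := by
      calc W[t + j]'b1
          = (seg x i' (i' + (((K + 1) * u.length : ℕ) : ℤ)))[t + j]'(by rw [seg_len]; exact htj) :=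
            List.getElem_of_eq hW' _
        _ = x (i' + ((t + j : ℕ) : ℤ)) := seg_getElem x _
    have b3 : W[t + j]? = u[(t + j) % u.length]? := flat_getElem? u (K + 1) (t + j) htj
    rw [List.getElem?_eq_getElem b1, List.getElem?_eq_getElem (Nat.mod_lt _ npos)] at b3
    have b4 := Option.some.inj b3
    rw [e1, e2, ← b2, b4]
  · exfalso
    push_neg at hcase
    obtain ⟨q1, ⟨hq1lt, hq1occ⟩, hq1max⟩ :=
      Int.exists_greatest_of_bdd
        (P := fun q => q < q0 ∧ seg x i (i + (u.length : ℤ)) = seg x q (q + (u.length : ℤ)))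
        ⟨q0, fun z hz => le_of_lt hz.1⟩
        ⟨i, by
          constructor
          · have hnn : (0 : ℤ) ≤ ((K * u.length : ℕ) : ℤ) := Int.natCast_nonneg _
            omega
          · rfl⟩
    have hq1i' : q1 < i' := by
      by_contra hle
      push_neg at hle
      exact absurd (hq0min q1 ⟨hle, hq1occ⟩) (not_le.mpr hq1lt)
    have hgap : ∀ q : ℤ, q1 < q → q < q0 →
        seg x i (i + (u.length : ℤ)) ≠ seg x q (q + (u.length : ℤ)) :=
      fun q hq hq' hocc => absurd (hq1max q ⟨hq', hocc⟩) (not_le.mpr hq)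
    have hne : seg x i (i + (u.length : ℤ)) ≠ [] := by
      intro h
      have hl := seg_len x i u.length
      rw [h] at hl
      simp at hl
      omega
    have hbound := occ_gap x K hlr _ hne u.length (seg_len x i u.length) q1 q0
      hq1occ hq0occ hq1lt hgap
    generalize hM : K * u.length = M at hbound hcase
    omega

end PF7

theorem stmt7 {A : Type*} [DecidableEq A] (x : ℤ → A) (K : ℕ)
    (hap : AperiodicSeq x) (hlr : LinRec x K) : PowerFree x (K + 1) := by
  intro u hu hWfac
  have npos : 0 < u.length := List.length_pos_iff.mpr hu
  have per : ∀ i : ℤ, x (i + (u.length : ℤ)) = x i := by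
    intro i
    obtain ⟨t, ht⟩ := PF7.window x hlr hu hWfac i
    obtain ⟨s, hs⟩ := PF7.window x hlr hu hWfac (i + 1)
    have hR1len : (u.rotate (t + 1)).length = u.length := List.length_rotate u (t + 1)
    have hR2len : (u.rotate s).length = u.length := List.length_rotate u s
    have htake : (u.rotate (t + 1)).take (u.length - 1) = (u.rotate s).take (u.length - 1) := by
      apply List.ext_getElem
      · rw [List.length_take, List.length_take, hR1len, hR2len]
      · intro j h1 h2
        have hj : j < u.length - 1 := by rw [List.length_take, hR1len] at h1; omega
        rw [List.getElem_take, List.getElem_take, List.getElem_rotate, List.getElem_rotate]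
        have e1 := ht (j + 1) (by omega)
        have e2 := hs j (by omega)
        have i1 : (j + (t + 1)) % u.length = (t + (j + 1)) % u.length := by
          rw [show j + (t + 1) = t + (j + 1) from by omega]
        have i2 : (j + s) % u.length = (s + j) % u.length := by rw [Nat.add_comm]
        rw [PF7.getElem_congr_idx i1, PF7.getElem_congr_idx i2, ← e1, ← e2]
        congr 1
        omega
    have hperm : (u.rotate (t + 1)) ~ (u.rotate s) :=
      (u.rotate_perm (t + 1)).trans (u.rotate_perm s).symm
    have h1n : u.length - 1 < (u.rotate (t + 1)).length := by rw [hR1len]; omega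
    have h2n : u.length - 1 < (u.rotate s).length := by rw [hR2len]; omega
    set a := (u.rotate (t + 1))[u.length - 1]'h1n with hadef
    set b := (u.rotate s)[u.length - 1]'h2n with hbdef
    have f1 : u.rotate (t + 1) = (u.rotate (t + 1)).take (u.length - 1) ++ [a] := by
      have hcg := List.take_concat_get h1n
      rw [List.concat_eq_append] at hcg
      rw [hadef, hcg, show u.length - 1 + 1 = u.length from by omega, ← hR1len, List.take_length]
    have f2 : u.rotate s = (u.rotate s).take (u.length - 1) ++ [b] := by
      have hcg := List.take_concat_get h2n
      rw [List.concat_eq_append] at hcg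
      rw [hbdef, hcg, show u.length - 1 + 1 = u.length from by omega, ← hR2len, List.take_length]
    have hcnt := hperm.count_eq b
    rw [f1] at hcnt
    rw [f2] at hcnt
    rw [htake, List.count_append, List.count_append] at hcnt
    have hab : a = b := by
      have h1' : List.count b [a] = 1 := by
        rw [List.count_singleton_self] at hcnt
        omega
      by_contra hne
      rw [List.count_singleton'] at h1'
      simp [hne] at h1'
    have hfin1 : x ((i + 1) + ((u.length - 1 : ℕ) : ℤ)) = b := by
      rw [hs (u.length - 1) (by omega), hbdef, List.getElem_rotate]
      exact PF7.getElem_congr_idx (by rw [Nat.add_comm]) _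
    have hfin2 : x i = u[t % u.length]'(Nat.mod_lt _ npos) := by
      have h0 := ht 0 npos
      simpa using h0
    have hfin3 : a = u[t % u.length]'(Nat.mod_lt _ npos) := by
      rw [hadef, List.getElem_rotate]
      exact PF7.getElem_congr_idx
        (by rw [show u.length - 1 + (t + 1) = t + u.length from by omega, Nat.add_mod_right]) _
    have hstep : x (i + (u.length : ℤ)) = x ((i + 1) + ((u.length - 1 : ℕ) : ℤ)) := by
      congr 1
      omega
    rw [hstep, hfin1, ← hab, hfin3]
    exact hfin2.symm
  exact hap ⟨(u.length : ℤ), by exact_mod_cast npos, per⟩
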